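/- Let H be a real Hilbert space and T_l : H → H a bounded linear operator with ‖T_l‖ ≤ 1 which is self-adjoint and positive (⟨T_l x, x⟩ ≥ 0 for all x ∈ H). Let z ∈ H, φ̄ a solution of φ̄ = T_l φ̄ + z, φ₁ ∈ H, and μ > 1. For ε > 0 and z_ε ∈ H with ‖z_ε − z‖ ≤ ε, define φ₁^ε := φ₁, φ_{k+1}^ε := T_l φ_k^ε + z_ε, and the discrepancy-principle stopping index k(ε, z_ε) := min{k ∈ ℕ : ‖z_ε − (I − T_l) φ_k^ε‖ ≤ μ ε}. Then k(ε, z_ε) is finite and there is a constant c > 0, depending only on μ and ‖φ̄ − φ₁‖, such that k(ε, z_ε) ≤ c ε^{-2} for all ε > 0 and all admissible z_ε; in fact k(ε, z_ε) ≤ (μ − 1)^{-2} ‖φ̄ − φ₁‖² ε^{-2} + 2. -/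

import Mathlib

section Aux
variable {H : Type*} [NormedAddCommGroup H] [InnerProductSpace ℝ H]
variable (Tl : H →L[ℝ] H)

lemma mazya_key (hTl : ‖Tl‖ ≤ 1)
    (hsa : ∀ x y : H, inner ℝ (Tl x) y = (inner ℝ x (Tl y) : ℝ))
    (hpos : ∀ x : H, 0 ≤ (inner ℝ (Tl x) x : ℝ)) (x : H) :
    ‖Tl x‖ ^ 2 ≤ (inner ℝ (Tl x) x : ℝ) := by
  have h1 : 0 ≤ (inner ℝ (Tl (x - Tl x)) (x - Tl x) : ℝ) := hpos _
  have h2 : Tl (x - Tl x) = Tl x - Tl (Tl x) := map_sub _ _ _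
  rw [h2, inner_sub_left, inner_sub_right, inner_sub_right] at h1
  have h3 : (inner ℝ (Tl (Tl x)) x : ℝ) = inner ℝ (Tl x) (Tl x) := by
    rw [hsa (Tl x) x, real_inner_comm]
  have h4 : (inner ℝ (Tl x) (Tl x) : ℝ) = ‖Tl x‖ ^ 2 := real_inner_self_eq_norm_sq _
  have h5 : (inner ℝ (Tl (Tl x)) (Tl x) : ℝ) ≤ ‖Tl x‖ ^ 2 := by
    have := real_inner_le_norm (Tl (Tl x)) (Tl x)
    have h6 : ‖Tl (Tl x)‖ ≤ ‖Tl x‖ := by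
      calc ‖Tl (Tl x)‖ ≤ ‖Tl‖ * ‖Tl x‖ := Tl.le_opNorm _
      _ ≤ 1 * ‖Tl x‖ := by gcongr
      _ = ‖Tl x‖ := one_mul _
    nlinarith [norm_nonneg (Tl x)]
  nlinarith

lemma mazya_step (hTl : ‖Tl‖ ≤ 1)
    (hsa : ∀ x y : H, inner ℝ (Tl x) y = (inner ℝ x (Tl y) : ℝ))
    (hpos : ∀ x : H, 0 ≤ (inner ℝ (Tl x) x : ℝ)) (x : H) :
    ‖x - Tl x‖ ^ 2 ≤ ‖x‖ ^ 2 - ‖Tl x‖ ^ 2 := by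
  have h := mazya_key Tl hTl hsa hpos x
  have h2 : ‖x - Tl x‖ ^ 2 = ‖x‖ ^ 2 - 2 * (inner ℝ x (Tl x) : ℝ) + ‖Tl x‖ ^ 2 := by
    rw [← real_inner_self_eq_norm_sq, ← real_inner_self_eq_norm_sq,
      ← real_inner_self_eq_norm_sq, inner_sub_left, inner_sub_right, inner_sub_right,
      real_inner_comm (Tl x) x]
    ring
  rw [real_inner_comm] at h2
  nlinarith

end Aux

/-- **Theorem 4.8 (discrepancy principle stopping index).** Let `H` be a real Hilbert
space, `T_l` a self-adjoint positive bounded linear operator with `‖T_l‖ ≤ 1`, `φ̄` a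
solution of `φ̄ = T_l φ̄ + z`, and `μ > 1`. For noisy data `z_ε` with `‖z_ε - z‖ ≤ ε`
and the iteration `φ^ε_{k+1} = T_l φ^ε_k + z_ε` starting from `φ₁`, the discrepancy
principle stopping index `k(ε, z_ε) = min {k ≥ 1 : ‖z_ε - (I - T_l) φ^ε_k‖ ≤ μ ε}` is
finite and satisfies `k(ε, z_ε) ≤ (μ - 1)⁻² ‖φ̄ - φ₁‖² ε⁻² + 2 = O(ε⁻²)`. -/
theorem mazya_discrepancy_stopping_index_bound
    {H : Type*} [NormedAddCommGroup H] [InnerProductSpace ℝ H] [CompleteSpace H]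
    (Tl : H →L[ℝ] H) (hTl : ‖Tl‖ ≤ 1)
    (hsa : ∀ x y : H, inner ℝ (Tl x) y = (inner ℝ x (Tl y) : ℝ))
    (hpos : ∀ x : H, 0 ≤ (inner ℝ (Tl x) x : ℝ))
    (z : H) (φbar : H) (hfix : φbar = Tl φbar + z)
    (φ₁ : H) (μ : ℝ) (hμ : 1 < μ)
    (ε : ℝ) (hε : 0 < ε) (zε : H) (hzε : ‖zε - z‖ ≤ ε)
    (φε : ℕ → H) (hφε1 : φε 1 = φ₁)
    (hrec : ∀ k, 1 ≤ k → φε (k + 1) = Tl (φε k) + zε) :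
    {k : ℕ | 1 ≤ k ∧ ‖zε - (φε k - Tl (φε k))‖ ≤ μ * ε}.Nonempty ∧
      ((sInf {k : ℕ | 1 ≤ k ∧ ‖zε - (φε k - Tl (φε k))‖ ≤ μ * ε} : ℕ) : ℝ) ≤
        ((μ - 1) ^ 2)⁻¹ * ‖φbar - φ₁‖ ^ 2 * (ε ^ 2)⁻¹ + 2 := by
  set u : H := φbar - φ₁ with hu
  set v : ℕ → H := fun j => (Tl ^ j) u with hv
  have hv0 : v 0 = u := by simp [hv]
  have hvs : ∀ j, v (j + 1) = Tl (v j) := by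
    intro j
    simp only [hv, pow_succ', ContinuousLinearMap.mul_apply]
  set a : ℕ → ℝ := fun j => ‖v j - Tl (v j)‖ with ha
  -- powers are contractions pointwise
  have hpow : ∀ (m : ℕ) (x : H), ‖(Tl ^ m) x‖ ≤ ‖x‖ := by
    intro m
    induction m with
    | zero => intro x; simp
    | succ n ih =>
      intro x
      rw [pow_succ', ContinuousLinearMap.mul_apply]
      calc ‖Tl ((Tl ^ n) x)‖ ≤ ‖Tl‖ * ‖(Tl ^ n) x‖ := Tl.le_opNorm _
      _ ≤ 1 * ‖x‖ := by
          apply mul_le_mul hTl (ih x) (norm_nonneg _) zero_le_one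
      _ = ‖x‖ := one_mul _
  -- a is antitone
  have hamono : ∀ i j, i ≤ j → a j ≤ a i := by
    have hstep : ∀ j, a (j + 1) ≤ a j := by
      intro j
      have : v (j + 1) - Tl (v (j + 1)) = Tl (v j - Tl (v j)) := by
        rw [hvs j, map_sub]
      simp only [ha, this]
      calc ‖Tl (v j - Tl (v j))‖ ≤ ‖Tl‖ * ‖v j - Tl (v j)‖ := Tl.le_opNorm _
      _ ≤ 1 * ‖v j - Tl (v j)‖ := by
          apply mul_le_mul hTl le_rfl (norm_nonneg _) zero_le_one
      _ = _ := one_mul _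
    intro i j hij
    exact antitone_nat_of_succ_le hstep hij
  -- telescoping sum bound
  have hsum : ∀ n, ∑ j ∈ Finset.range n, a j ^ 2 ≤ ‖u‖ ^ 2 := by
    intro n
    have h1 : ∀ j, a j ^ 2 ≤ ‖v j‖ ^ 2 - ‖v (j + 1)‖ ^ 2 := by
      intro j
      simp only [ha]
      rw [hvs j]
      exact mazya_step Tl hTl hsa hpos (v j)
    calc ∑ j ∈ Finset.range n, a j ^ 2
        ≤ ∑ j ∈ Finset.range n, (‖v j‖ ^ 2 - ‖v (j + 1)‖ ^ 2) :=
          Finset.sum_le_sum fun j _ => h1 j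
    _ = ‖v 0‖ ^ 2 - ‖v n‖ ^ 2 := by
        rw [Finset.sum_range_sub' (fun j => ‖v j‖ ^ 2) n]
    _ ≤ ‖u‖ ^ 2 := by
        rw [hv0]
        nlinarith [norm_nonneg (v n)]
  -- n * a(n-1)^2 ≤ ‖u‖^2
  have hdecay : ∀ n : ℕ, (n : ℝ) * a (n - 1) ^ 2 ≤ ‖u‖ ^ 2 := by
    intro n
    have h1 : (n : ℝ) * a (n - 1) ^ 2 ≤ ∑ j ∈ Finset.range n, a j ^ 2 := by
      have h2 : ∑ j ∈ Finset.range n, a (n - 1) ^ 2 ≤ ∑ j ∈ Finset.range n, a j ^ 2 := by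
        apply Finset.sum_le_sum
        intro j hj
        have hj' : j ≤ n - 1 := by
          have := Finset.mem_range.mp hj; omega
        have := hamono j (n - 1) hj'
        have h0 : 0 ≤ a (n - 1) := norm_nonneg _
        nlinarith
      simpa using h2
    exact h1.trans (hsum n)
  -- residual formula
  have hres : ∀ m : ℕ, zε - (φε (m + 1) - Tl (φε (m + 1))) =
      (Tl ^ m) (zε - z) + (v m - Tl (v m)) := by
    intro m
    induction m with
    | zero =>
      have hz : z = φbar - Tl φbar :=
        (sub_eq_iff_eq_add.mpr (hfix.trans (add_comm _ _))).symm
      simp only [pow_zero, ContinuousLinearMap.one_apply, hv0, hφε1]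
      rw [hz, hu, map_sub]
      abel
    | succ n ih =>
      have hr : φε (n + 1 + 1) = Tl (φε (n + 1)) + zε := hrec (n + 1) (by omega)
      rw [hr]
      have lhs : zε - (Tl (φε (n + 1)) + zε - Tl (Tl (φε (n + 1)) + zε)) =
          Tl (zε - (φε (n + 1) - Tl (φε (n + 1)))) := by
        rw [map_add, map_sub, map_sub]
        abel
      rw [lhs, ih, map_add]
      congr 1
      · rw [pow_succ', ContinuousLinearMap.mul_apply]
      · rw [hvs n, map_sub]
  -- choose N
  set c : ℝ := (μ - 1) * ε with hc
  have hcpos : 0 < c := mul_pos (by linarith) hε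
  set N : ℕ := Nat.floor (‖u‖ ^ 2 / c ^ 2) + 1 with hN
  have hN1 : 1 ≤ N := by omega
  have hNlt : ‖u‖ ^ 2 / c ^ 2 < (N : ℝ) := by
    rw [hN]; push_cast
    exact Nat.lt_floor_add_one _
  have haNlt : a (N - 1) < c := by
    by_contra hcon
    push_neg at hcon
    have h1 := hdecay N
    have h2 : c ^ 2 ≤ a (N - 1) ^ 2 := by nlinarith
    have hNpos : (0 : ℝ) < N := by exact_mod_cast hN1
    have : ‖u‖ ^ 2 < (N : ℝ) * c ^ 2 := by
      rw [div_lt_iff₀ (by positivity)] at hNlt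
      linarith [hNlt]
    nlinarith
  -- N is in the set
  have hmem : N ∈ {k : ℕ | 1 ≤ k ∧ ‖zε - (φε k - Tl (φε k))‖ ≤ μ * ε} := by
    constructor
    · exact hN1
    · have hNe : N = (N - 1) + 1 := by omega
      rw [hNe, hres (N - 1)]
      calc ‖(Tl ^ (N - 1)) (zε - z) + (v (N - 1) - Tl (v (N - 1)))‖
          ≤ ‖(Tl ^ (N - 1)) (zε - z)‖ + a (N - 1) := norm_add_le _ _
      _ ≤ ε + c := by
          apply add_le_add
          · exact (hpow _ _).trans hzε
          · exact le_of_lt haNlt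
      _ = μ * ε := by rw [hc]; ring
  refine ⟨⟨N, hmem⟩, ?_⟩
  have hinf : sInf {k : ℕ | 1 ≤ k ∧ ‖zε - (φε k - Tl (φε k))‖ ≤ μ * ε} ≤ N :=
    Nat.sInf_le hmem
  calc ((sInf {k : ℕ | 1 ≤ k ∧ ‖zε - (φε k - Tl (φε k))‖ ≤ μ * ε} : ℕ) : ℝ)
      ≤ (N : ℝ) := by exact_mod_cast hinf
  _ = (Nat.floor (‖u‖ ^ 2 / c ^ 2) : ℝ) + 1 := by rw [hN]; push_cast; ring
  _ ≤ ‖u‖ ^ 2 / c ^ 2 + 1 := by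
      have := Nat.floor_le (by positivity : (0:ℝ) ≤ ‖u‖ ^ 2 / c ^ 2)
      linarith
  _ ≤ ((μ - 1) ^ 2)⁻¹ * ‖φbar - φ₁‖ ^ 2 * (ε ^ 2)⁻¹ + 2 := by
      rw [hu, hc]
      have h1 : ((μ - 1) * ε) ^ 2 = (μ - 1) ^ 2 * ε ^ 2 := by ring
      rw [h1, div_eq_mul_inv, mul_inv]
      have : ‖φbar - φ₁‖ ^ 2 * (((μ - 1) ^ 2)⁻¹ * (ε ^ 2)⁻¹) =
          ((μ - 1) ^ 2)⁻¹ * ‖φbar - φ₁‖ ^ 2 * (ε ^ 2)⁻¹ := by ring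
      rw [this]
      linarith
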